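/- If G is the hypergraph of a building set (every pairwise-intersecting pair of hyperedges has their union also a hyperedge), then for every acyclic orientation O of G with singleton heads, every vertex of the Hasse diagram of G/O has in-degree at most 1; consequently the Hasse diagram is a forest. -/

import Mathlib

/-- Arc relation of a singleton-head orientation of the hypergraph of a
building set: arcs from `h I` to every other vertex of `I`, for each member
`I` of the building set with at least two elements. -/
def BArc {n : ℕ} (B : Finset (Finset (Fin n))) (h : Finset (Fin n) → Fin n)
    (x y : Fin n) : Prop :=
  ∃ I ∈ B, 2 ≤ I.card ∧ h I = x ∧ y ∈ I ∧ y ≠ x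

/-- Covering relation (Hasse diagram) of the partial order generated by the
arcs. -/
def BCover {n : ℕ} (B : Finset (Finset (Fin n))) (h : Finset (Fin n) → Fin n)
    (x y : Fin n) : Prop :=
  Relation.TransGen (BArc B h) x y ∧
    ¬ ∃ z, Relation.TransGen (BArc B h) x z ∧ Relation.TransGen (BArc B h) z y

namespace BProofAux

variable {n : ℕ}

lemma arc_mono {B B' : Finset (Finset (Fin n))} {h : Finset (Fin n) → Fin n}
    (hBB : B' ⊆ B) {x y : Fin n} : BArc B' h x y → BArc B h x y := by
  rintro ⟨I, hI, hc, hh, hy, hne⟩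
  exact ⟨I, hBB hI, hc, hh, hy, hne⟩

lemma sup_mem_of_subset {B : Finset (Finset (Fin n))}
    (hclosed : ∀ I ∈ B, ∀ J ∈ B, (I ∩ J).Nonempty → I ∪ J ∈ B) (x : Fin n) :
    ∀ F : Finset (Finset (Fin n)), (hFne : F.Nonempty) → F ⊆ B → (∀ S ∈ F, x ∈ S) →
      F.sup id ∈ B ∧ x ∈ F.sup id := by
  intro F hFne
  induction hFne using Finset.Nonempty.cons_induction with
  | singleton a =>
    intro hsub hx
    simp only [Finset.sup_singleton, id]
    exact ⟨hsub (by simp), hx a (by simp)⟩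
  | cons a F ha hF ih =>
    intro hsub hx
    have h1 := ih (fun S hS => hsub (Finset.mem_cons_of_mem hS))
      (fun S hS => hx S (Finset.mem_cons_of_mem hS))
    have ha' : a ∈ B := hsub (Finset.mem_cons_self a F)
    have hxa : x ∈ a := hx a (Finset.mem_cons_self a F)
    rw [Finset.sup_cons]
    show a ∪ F.sup id ∈ B ∧ x ∈ a ∪ F.sup id
    exact ⟨hclosed a ha' (F.sup id) h1.1 ⟨x, Finset.mem_inter.mpr ⟨hxa, h1.2⟩⟩,
      Finset.mem_union_left _ hxa⟩

lemma chain (h : Finset (Fin n) → Fin n) (x : Fin n) :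
    ∀ k : ℕ, ∀ B : Finset (Finset (Fin n)),
      (∀ I ∈ B, ∀ J ∈ B, (I ∩ J).Nonempty → I ∪ J ∈ B) →
      (∀ I ∈ B, 2 ≤ I.card → h I ∈ I) →
      (∀ v : Fin n, ¬ Relation.TransGen (BArc B h) v v) →
      ((B.filter fun S => x ∈ S).sup id).card ≤ k →
      ∀ I ∈ B, ∀ J ∈ B, 2 ≤ I.card → 2 ≤ J.card → x ∈ I → x ∈ J →
        h I = h J ∨ Relation.TransGen (BArc B h) (h I) (h J) ∨
          Relation.TransGen (BArc B h) (h J) (h I) := by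
  intro k
  induction k using Nat.strong_induction_on with
  | _ k ih =>
    intro B hclosed hhead hacyc hbound I hI J hJ hcI hcJ hxI hxJ
    by_cases hIJ : h I = h J
    · exact Or.inl hIJ
    set F := B.filter fun S => x ∈ S with hFdef
    have hIF : I ∈ F := Finset.mem_filter.mpr ⟨hI, hxI⟩
    have hJF : J ∈ F := Finset.mem_filter.mpr ⟨hJ, hxJ⟩
    set M := F.sup id with hMdef
    have hIM : I ⊆ M := Finset.le_sup (f := id) hIF
    have hJM : J ⊆ M := Finset.le_sup (f := id) hJF
    obtain ⟨hMB, hxM⟩ := sup_mem_of_subset hclosed x F ⟨I, hIF⟩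
      (Finset.filter_subset _ _) (fun S hS => (Finset.mem_filter.mp hS).2)
    have hMc : 2 ≤ M.card := le_trans hcI (Finset.card_le_card hIM)
    set m := h M with hmdef
    have hmM : m ∈ M := hhead M hMB hMc
    have key : ∀ K, K ∈ B → x ∈ K → 2 ≤ K.card → h K ≠ m →
        m ∉ K ∧ BArc B h m (h K) := by
      intro K hK hxK hcK hKm
      have hKM : K ⊆ M := Finset.le_sup (f := id) (Finset.mem_filter.mpr ⟨hK, hxK⟩)
      have hhKM : h K ∈ M := hKM (hhead K hK hcK)
      have arc1 : BArc B h m (h K) := ⟨M, hMB, hMc, rfl, hhKM, hKm⟩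
      refine ⟨fun hmK => ?_, arc1⟩
      have arc2 : BArc B h (h K) m := ⟨K, hK, hcK, rfl, hmK, fun e => hKm e.symm⟩
      exact hacyc m ((Relation.TransGen.single arc1).tail arc2)
    by_cases hIm : h I = m
    · by_cases hJm : h J = m
      · exact Or.inl (hIm.trans hJm.symm)
      · exact Or.inr (Or.inl (hIm ▸ Relation.TransGen.single (key J hJ hxJ hcJ hJm).2))
    · by_cases hJm : h J = m
      · exact Or.inr (Or.inr (hJm ▸ Relation.TransGen.single (key I hI hxI hcI hIm).2))
      · set B' := B.filter (fun S => S ⊆ M ∧ m ∉ S) with hB'def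
        have hB'B : B' ⊆ B := Finset.filter_subset _ _
        have hclosed' : ∀ K ∈ B', ∀ L ∈ B', (K ∩ L).Nonempty → K ∪ L ∈ B' := by
          intro K hK L hL hKL
          obtain ⟨hK1, hKM, hKm⟩ := Finset.mem_filter.mp hK
          obtain ⟨hL1, hLM, hLm⟩ := Finset.mem_filter.mp hL
          refine Finset.mem_filter.mpr ⟨hclosed K hK1 L hL1 hKL, Finset.union_subset hKM hLM, ?_⟩
          simp only [Finset.mem_union]
          rintro (hc | hc)
          exacts [hKm hc, hLm hc]
        have hhead' : ∀ K ∈ B', 2 ≤ K.card → h K ∈ K := fun K hK => hhead K (hB'B hK)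
        have hacyc' : ∀ v : Fin n, ¬ Relation.TransGen (BArc B' h) v v := fun v hv =>
          hacyc v (Relation.TransGen.mono (fun a b hab => arc_mono hB'B hab) _ _ hv)
        have hIB' : I ∈ B' := Finset.mem_filter.mpr ⟨hI, hIM, (key I hI hxI hcI hIm).1⟩
        have hJB' : J ∈ B' := Finset.mem_filter.mpr ⟨hJ, hJM, (key J hJ hxJ hcJ hJm).1⟩
        have hbound' : ((B'.filter fun S => x ∈ S).sup id).card ≤ M.card - 1 := by
          have hsub : (B'.filter fun S => x ∈ S).sup id ⊆ M.erase m := by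
            intro a ha
            obtain ⟨S, hS, haS⟩ := Finset.mem_sup.mp ha
            obtain ⟨hS1, -⟩ := Finset.mem_filter.mp hS
            obtain ⟨-, hSM, hSm⟩ := Finset.mem_filter.mp hS1
            exact Finset.mem_erase.mpr ⟨fun e => hSm (e ▸ haS), hSM haS⟩
          calc ((B'.filter fun S => x ∈ S).sup id).card
              ≤ (M.erase m).card := Finset.card_le_card hsub
            _ = M.card - 1 := Finset.card_erase_of_mem hmM
        have hlt : M.card - 1 < k := by omega
        rcases ih (M.card - 1) hlt B' hclosed' hhead' hacyc' hbound'
            I hIB' J hJB' hcI hcJ hxI hxJ with h1 | h2 | h3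
        · exact Or.inl h1
        · exact Or.inr (Or.inl (Relation.TransGen.mono (fun a b hab => arc_mono hB'B hab) _ _ h2))
        · exact Or.inr (Or.inr (Relation.TransGen.mono (fun a b hab => arc_mono hB'B hab) _ _ h3))

end BProofAux

/-- If `G` is the hypergraph of a building set, then for every acyclic
orientation with singleton heads, every vertex of the Hasse diagram of `G/O`
has in-degree at most `1`; consequently the Hasse diagram is a forest. -/
theorem stmt6 (n : ℕ) (B : Finset (Finset (Fin n)))
    (hne : ∀ I ∈ B, I.Nonempty)
    (hclosed : ∀ I ∈ B, ∀ J ∈ B, (I ∩ J).Nonempty → I ∪ J ∈ B)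
    (hsing : ∀ i : Fin n, {i} ∈ B)
    (h : Finset (Fin n) → Fin n)
    (hhead : ∀ I ∈ B, 2 ≤ I.card → h I ∈ I)
    (hacyc : ∀ v : Fin n, ¬ Relation.TransGen (BArc B h) v v) :
    (∀ x y y' : Fin n, BCover B h y x → BCover B h y' x → y = y') ∧
      (SimpleGraph.fromRel (BCover B h)).IsAcyclic := by
  have cover_arc : ∀ {y x : Fin n}, BCover B h y x → BArc B h y x := by
    rintro y x ⟨ht, hmin⟩
    cases ht with
    | single h1 => exact h1
    | tail t1 h1 => exact absurd ⟨_, t1, Relation.TransGen.single h1⟩ hmin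
  have uniq : ∀ x y y' : Fin n, BCover B h y x → BCover B h y' x → y = y' := by
    intro x y y' hy hy'
    obtain ⟨I, hI, hcI, hhI, hxI, hxy⟩ := cover_arc hy
    obtain ⟨J, hJ, hcJ, hhJ, hxJ, hxy'⟩ := cover_arc hy'
    rcases BProofAux.chain h x ((B.filter fun S => x ∈ S).sup id).card B hclosed hhead hacyc le_rfl I hI J hJ hcI hcJ hxI hxJ with h1 | h2 | h3
    · rw [← hhI, ← hhJ, h1]
    · exact absurd ⟨y', hhI ▸ hhJ ▸ h2, hy'.1⟩ hy.2
    · exact absurd ⟨y, hhJ ▸ hhI ▸ h3, hy.1⟩ hy'.2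
  refine ⟨uniq, ?_⟩
  intro v c hc
  classical
  have hwf : WellFounded (fun a b : Fin n => Relation.TransGen (BArc B h) b a) := by
    have h1 : IsTrans (Fin n) (fun a b => Relation.TransGen (BArc B h) b a) :=
      ⟨fun a b c hab hbc => hbc.trans hab⟩
    have h2 : IsIrrefl (Fin n) (fun a b => Relation.TransGen (BArc B h) b a) :=
      ⟨fun a ha => hacyc a ha⟩
    exact Finite.wellFounded_of_trans_of_irrefl _
  obtain ⟨x, hxs, hxmin⟩ := hwf.has_min {z | z ∈ c.support}
    ⟨v, c.start_mem_support⟩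
  have hc' := hc.rotate hxs
  have hrot := SimpleGraph.Walk.support_rotate c x hxs
  obtain ⟨y, hadj, p, hcp⟩ := SimpleGraph.Walk.not_nil_iff.mp hc'.not_nil
  rw [hcp] at hc' hrot
  -- membership transfer
  have hmemc : ∀ z ∈ p.support, z ∈ c.support := by
    intro z hz
    have : z ∈ (SimpleGraph.Walk.cons hadj p).support.tail := by
      simpa [SimpleGraph.Walk.support_cons] using hz
    exact List.mem_of_mem_tail (hrot.mem_iff.mp this)
  -- lengths
  have hlen3 := hc'.three_le_length
  rw [SimpleGraph.Walk.length_cons] at hlen3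
  have hpnil : ¬ p.reverse.Nil := by
    rw [SimpleGraph.Walk.not_nil_iff_lt_length, SimpleGraph.Walk.length_reverse]
    omega
  obtain ⟨y', hadj2, r, hpr⟩ := SimpleGraph.Walk.not_nil_iff.mp hpnil
  have hyp : y ∈ c.support := hmemc y p.start_mem_support
  have hy'p : y' ∈ c.support := by
    apply hmemc
    have : y' ∈ p.reverse.support := by rw [hpr]; simp
    simpa [SimpleGraph.Walk.support_reverse] using this
  -- both neighbors cover x
  have hcov : ∀ {z : Fin n}, z ∈ c.support →
      (SimpleGraph.fromRel (BCover B h)).Adj x z → BCover B h z x := by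
    intro z hz ha
    rw [SimpleGraph.fromRel_adj] at ha
    rcases ha.2 with hxz | hzx
    · exact absurd hxz.1 (hxmin z hz)
    · exact hzx
  have hcy : BCover B h y x := hcov hyp hadj
  have hcy' : BCover B h y' x := hcov hy'p hadj2
  have hyy' : y = y' := uniq x y y' hcy hcy'
  subst hyy'
  -- derive contradiction: r : Walk y y must be nil, contradicting length
  obtain ⟨hpath, -⟩ := (SimpleGraph.Walk.cons_isCycle_iff p hadj).mp hc'
  have hrpath : r.IsPath := by
    have := hpath.reverse
    rw [hpr] at this
    exact this.of_cons
  have hrnil : r = SimpleGraph.Walk.nil := (SimpleGraph.Walk.isPath_iff_eq_nil (p := r)).mp hrpath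
  have hplen : p.length = 1 := by
    have : p.reverse.length = 1 := by rw [hpr, hrnil]; simp
    rwa [SimpleGraph.Walk.length_reverse] at this
  omega
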